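/- Let G be a group with a submonoid M such that G = M⁻¹M (every element of G is a left fraction over M), M is cancellative, any two elements of M have a left common multiple, and < is a strict linear order on M compatible with left multiplication (x < y implies zx < zy). Define C = { x⁻¹y : x, y ∈ M, x < y }. Then C·C ⊆ C and C ∩ C⁻¹ = ∅; consequently the relation g <' h iff g⁻¹h ∈ C is a strict linear order on G compatible with left multiplication. -/
import Mathlib


/-- Ordering a group of fractions: if `G = M⁻¹M` for a submonoid `M` in which any
two elements have a common left multiple, and `<` is a strict linear order on `M`
compatible with left multiplication, then `C = { x⁻¹y : x, y ∈ M, x < y }`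
satisfies `C·C ⊆ C` and `C ∩ C⁻¹ = ∅`, and the induced relation
`g <' h ↔ g⁻¹h ∈ C` is a strict linear order on `G` compatible with left
multiplication. -/
theorem positive_cone_of_ordered_fractions {G : Type*} [Group G] (S : Submonoid G)
    (hfrac : ∀ g : G, ∃ x ∈ S, ∃ y ∈ S, g = x⁻¹ * y)
    (hOre : ∀ x ∈ S, ∀ y ∈ S, ∃ u ∈ S, ∃ v ∈ S, u * x = v * y)
    (r : G → G → Prop)
    (hirr : ∀ x ∈ S, ¬ r x x)
    (htrans : ∀ x ∈ S, ∀ y ∈ S, ∀ z ∈ S, r x y → r y z → r x z)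
    (htri : ∀ x ∈ S, ∀ y ∈ S, r x y ∨ x = y ∨ r y x)
    (hcompat : ∀ z ∈ S, ∀ x ∈ S, ∀ y ∈ S, r x y → r (z * x) (z * y)) :
    let C : Set G := {g | ∃ x ∈ S, ∃ y ∈ S, r x y ∧ g = x⁻¹ * y}
    (∀ g ∈ C, ∀ h ∈ C, g * h ∈ C) ∧
    (∀ g ∈ C, g⁻¹ ∉ C) ∧
    (∀ g : G, g⁻¹ * g ∉ C) ∧
    (∀ g h k : G, g⁻¹ * h ∈ C → h⁻¹ * k ∈ C → g⁻¹ * k ∈ C) ∧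
    (∀ g h : G, g⁻¹ * h ∈ C ∨ g = h ∨ h⁻¹ * g ∈ C) ∧
    (∀ k g h : G, g⁻¹ * h ∈ C → (k * g)⁻¹ * (k * h) ∈ C) := by
  intro C
  have hmul : ∀ g ∈ C, ∀ h ∈ C, g * h ∈ C := by
    rintro g ⟨x, hx, y, hy, hxy, rfl⟩ h ⟨z, hz, w, hw, hzw, rfl⟩
    obtain ⟨u, hu, v, hv, huv⟩ := hOre y hy z hz
    have r1 : r (u * x) (u * y) := hcompat u hu x hx y hy hxy
    have r2 : r (u * y) (v * w) := by
      rw [huv]; exact hcompat v hv z hz w hw hzw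
    refine ⟨u * x, mul_mem hu hx, v * w, mul_mem hv hw,
      htrans _ (mul_mem hu hx) _ (mul_mem hu hy) _ (mul_mem hv hw) r1 r2, ?_⟩
    have key : u * y * (z⁻¹ * w) = v * w := by rw [huv]; group
    calc x⁻¹ * y * (z⁻¹ * w) = (u * x)⁻¹ * (u * y * (z⁻¹ * w)) := by group
      _ = (u * x)⁻¹ * (v * w) := by rw [key]
  have hdisj : ∀ g ∈ C, g⁻¹ ∉ C := by
    rintro g ⟨x, hx, y, hy, hxy, rfl⟩ ⟨z, hz, w, hw, hzw, heq⟩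
    rw [mul_inv_rev, inv_inv] at heq
    obtain ⟨u, hu, v, hv, huv⟩ := hOre y hy z hz
    have h1 : x = y * (z⁻¹ * w) := by
      calc x = y * (y⁻¹ * x) := by group
        _ = y * (z⁻¹ * w) := by rw [heq]
    have hxw : u * x = v * w := by
      calc u * x = u * y * (z⁻¹ * w) := by rw [h1]; group
        _ = v * z * (z⁻¹ * w) := by rw [huv]
        _ = v * w := by group
    have r1 : r (u * x) (u * y) := hcompat u hu x hx y hy hxy
    have r2 : r (v * z) (v * w) := hcompat v hv z hz w hw hzw
    rw [huv, hxw] at r1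
    exact hirr (v * z) (mul_mem hv hz)
      (htrans _ (mul_mem hv hz) _ (mul_mem hv hw) _ (mul_mem hv hz) r2 r1)
  refine ⟨hmul, hdisj, ?_, ?_, ?_, ?_⟩
  · rintro g ⟨x, hx, y, hy, hxy, heq⟩
    rw [inv_mul_cancel] at heq
    have hxey : x = y := by
      have : x * (1 : G) = x * (x⁻¹ * y) := by rw [← heq]
      simpa using this
    exact hirr x hx (hxey ▸ hxy)
  · intro g h k h1 h2
    have := hmul _ h1 _ h2
    rwa [show g⁻¹ * h * (h⁻¹ * k) = g⁻¹ * k by group] at this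
  · intro g h
    obtain ⟨x, hx, y, hy, hgh⟩ := hfrac (g⁻¹ * h)
    rcases htri x hx y hy with h1 | h1 | h1
    · exact Or.inl ⟨x, hx, y, hy, h1, hgh⟩
    · refine Or.inr (Or.inl ?_)
      subst h1
      have : g⁻¹ * h = 1 := by rw [hgh]; group
      have := congrArg (g * ·) this
      simpa using this.symm
    · refine Or.inr (Or.inr ⟨y, hy, x, hx, h1, ?_⟩)
      have := congrArg (·⁻¹) hgh
      simpa [mul_inv_rev] using this
  · intro k g h h1
    rwa [show (k * g)⁻¹ * (k * h) = g⁻¹ * h by group]
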